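/- Let r ≥ 2 be an integer, let n > 0 be a real number, and let x > 0 be a real number. Then (r−1)·x^{1/(r−1)} + n/(2^r·x) ≥ (r/4)·n^{1/r}. -/

import Mathlib

/-- For an integer `r ≥ 2` and positive reals `n`, `x`,
`(r-1)·x^{1/(r-1)} + n/(2^r·x) ≥ (r/4)·n^{1/r}`. -/
theorem adaptive_lb_core (r : ℕ) (hr : 2 ≤ r) (n x : ℝ) (hn : 0 < n) (hx : 0 < x) :
    ((r : ℝ) - 1) * x ^ ((1 : ℝ) / ((r : ℝ) - 1)) + n / (2 ^ r * x)
      ≥ ((r : ℝ) / 4) * n ^ ((1 : ℝ) / (r : ℝ)) := by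
  have hr2 : (2:ℝ) ≤ (r:ℝ) := by exact_mod_cast hr
  have hr1 : (0:ℝ) < (r:ℝ) - 1 := by linarith
  have hR : (0:ℝ) < (r:ℝ) := by linarith
  set a := x ^ ((1:ℝ)/((r:ℝ)-1)) with ha
  set b := n / (2^r * x) with hb
  have hapos : 0 < a := Real.rpow_pos_of_pos hx _
  have hbpos : 0 < b := div_pos hn (by positivity)
  have hw : ((r:ℝ)-1)/(r:ℝ) + 1/(r:ℝ) = 1 := by field_simp; ring
  have amgm := Real.geom_mean_le_arith_mean2_weighted
    (div_nonneg hr1.le hR.le) (by positivity) hapos.le hbpos.le hw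
  -- compute a ^ ((r-1)/r) = x ^ (1/r)
  have haw : a ^ (((r:ℝ)-1)/(r:ℝ)) = x ^ ((1:ℝ)/(r:ℝ)) := by
    rw [ha, ← Real.rpow_mul hx.le]
    congr 1
    field_simp
  -- compute b ^ (1/r) = n^(1/r) / (2 * x^(1/r))
  have h2r : ((2:ℝ)^r * x) ^ ((1:ℝ)/(r:ℝ)) = 2 * x ^ ((1:ℝ)/(r:ℝ)) := by
    rw [Real.mul_rpow (by positivity) hx.le, ← Real.rpow_natCast (2:ℝ) r,
      ← Real.rpow_mul (by norm_num)]
    rw [mul_one_div, div_self hR.ne', Real.rpow_one]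
  have hbw : b ^ ((1:ℝ)/(r:ℝ)) = n ^ ((1:ℝ)/(r:ℝ)) / (2 * x ^ ((1:ℝ)/(r:ℝ))) := by
    rw [hb, Real.div_rpow hn.le (by positivity), h2r]
  have hxr : (0:ℝ) < x ^ ((1:ℝ)/(r:ℝ)) := Real.rpow_pos_of_pos hx _
  have hprod : a ^ (((r:ℝ)-1)/(r:ℝ)) * b ^ ((1:ℝ)/(r:ℝ)) = n ^ ((1:ℝ)/(r:ℝ)) / 2 := by
    rw [haw, hbw]
    field_simp
  rw [hprod] at amgm
  have hnr : (0:ℝ) < n ^ ((1:ℝ)/(r:ℝ)) := Real.rpow_pos_of_pos hn _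
  have key : (r:ℝ) * (n ^ ((1:ℝ)/(r:ℝ)) / 2) ≤ (r:ℝ) * (((r:ℝ)-1)/(r:ℝ) * a + 1/(r:ℝ) * b) :=
    mul_le_mul_of_nonneg_left amgm hR.le
  have hexp : (r:ℝ) * (((r:ℝ)-1)/(r:ℝ) * a + 1/(r:ℝ) * b) = ((r:ℝ)-1) * a + b := by
    field_simp
  rw [hexp] at key
  have : ((r:ℝ)/4) * n ^ ((1:ℝ)/(r:ℝ)) ≤ (r:ℝ) * (n ^ ((1:ℝ)/(r:ℝ)) / 2) := by
    nlinarith [hnr.le, hR.le]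
  linarith
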